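/- Let G(N,N,p) be the bipartite random graph, fix v ∈ V₁, and let X_v, Y_v, Γ(v) be as in the decomposition X = I_v + X_v - Y_v. Then for all s ≥ 0, E[e^{-sX}] ≤ E[e^{-sX_v}]·∏_{w ∈ V₂}(1 + (e^s - 1)·(1-p)^{N-1}·p), and hence E[e^{-sX}] ≤ E[e^{-sX_v}]·exp((e^s - 1)·N·(1-p)^{N-1}·p). -/

import Mathlib

open MeasureTheory

attribute [local instance] Classical.propDecidable

/-- The distribution of i.i.d. Bernoulli(p) indicators indexed by `α`:
the model of the random bipartite graph `G(N,N,p)` when `α = Fin N × Fin N`. -/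
noncomputable def productBernoulli (α : Type) [Fintype α] [DecidableEq α] (p : ℝ) :
    Measure (α → Bool) :=
  ∑ f : α → Bool,
    (∏ a : α, if f a then ENNReal.ofReal p else ENNReal.ofReal (1 - p)) • Measure.dirac f

/-- Adjacency in the bipartite graph on parts `V₁ = Fin N` (left) and `V₂ = Fin N` (right)
encoded by the cross-edge indicators `f`. -/
def adjB {N : ℕ} (f : Fin N × Fin N → Bool) : (Fin N ⊕ Fin N) → (Fin N ⊕ Fin N) → Prop
  | Sum.inl i, Sum.inr j => f (i, j) = true
  | Sum.inr j, Sum.inl i => f (i, j) = true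
  | _, _ => False

/-- The number of isolated vertices of the bipartite graph encoded by `f` (as a real). -/
noncomputable def isoCount {N : ℕ} (f : Fin N × Fin N → Bool) : ℝ :=
  ∑ v : Fin N ⊕ Fin N, if ∀ w, ¬ adjB f v w then (1 : ℝ) else 0

/-- Indicator that the vertex `v` is isolated. -/
noncomputable def isoInd {N : ℕ} (v : Fin N ⊕ Fin N) (f : Fin N × Fin N → Bool) : ℝ :=
  if ∀ w, ¬ adjB f v w then 1 else 0

/-- Indicator `I_w^v` that `w` is isolated when ignoring the edge status of pairs
involving `v`, i.e. `w` has no neighbors among pairs not involving `v`. -/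
noncomputable def isoIndAway {N : ℕ} (v w : Fin N ⊕ Fin N) (f : Fin N × Fin N → Bool) : ℝ :=
  if ∀ u, u ≠ v → ¬ adjB f w u then 1 else 0

/-- `X_v = ∑_{w ≠ v} I_w^v`. -/
noncomputable def Xv {N : ℕ} (v : Fin N ⊕ Fin N) (f : Fin N × Fin N → Bool) : ℝ :=
  ∑ w : Fin N ⊕ Fin N, if w ≠ v then isoIndAway v w f else 0

/-- `Y_v = ∑_{w ∈ Γ(v)} I_w^v`, the sum over the neighborhood of `v`. -/
noncomputable def Yv {N : ℕ} (v : Fin N ⊕ Fin N) (f : Fin N × Fin N → Bool) : ℝ :=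
  ∑ w : Fin N ⊕ Fin N, if adjB f v w then isoIndAway v w f else 0


noncomputable def wB (p : ℝ) (b : Bool) : ℝ := if b then p else 1 - p

noncomputable def SS (α : Type) [Fintype α] [DecidableEq α] (p : ℝ) (F : (α → Bool) → ℝ) : ℝ :=
  ∑ f : α → Bool, (∏ a : α, wB p (f a)) * F f

variable {p : ℝ}

lemma wB_nonneg (hp0 : 0 ≤ p) (hp1 : p ≤ 1) (b : Bool) : 0 ≤ wB p b := by
  cases b <;> simp [wB] <;> linarith

lemma wprod_nonneg {α : Type} [Fintype α] [DecidableEq α] (hp0 : 0 ≤ p) (hp1 : p ≤ 1) (f : α → Bool) :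
    0 ≤ ∏ a : α, wB p (f a) :=
  Finset.prod_nonneg fun a _ => wB_nonneg hp0 hp1 _

lemma integral_productBernoulli {α : Type} [Fintype α] [DecidableEq α]
    (hp0 : 0 ≤ p) (hp1 : p ≤ 1) (g : (α → Bool) → ℝ) :
    (∫ f, g f ∂(productBernoulli α p)) = SS α p g := by
  rw [productBernoulli, integral_finset_sum_measure]
  · refine Finset.sum_congr rfl fun f _ => ?_
    rw [integral_smul_measure, integral_dirac]
    rw [ENNReal.toReal_prod]
    congr 1
    refine Finset.prod_congr rfl fun a _ => ?_
    cases h : f a <;> simp [wB, ENNReal.toReal_ofReal, hp0, sub_nonneg.2 hp1]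
  · intro f _
    refine (Integrable.smul_measure ?_ ?_)
    · exact Integrable.of_finite
    · exact ENNReal.prod_ne_top (fun a _ => by split <;> exact ENNReal.ofReal_ne_top)

lemma SS_succ {n : ℕ} (F : (Fin (n+1) → Bool) → ℝ) :
    SS (Fin (n+1)) p F =
      wB p false * SS (Fin n) p (fun g => F (Fin.cons false g)) +
      wB p true * SS (Fin n) p (fun g => F (Fin.cons true g)) := by
  unfold SS
  rw [← Equiv.sum_comp (Fin.consEquiv (fun _ : Fin (n+1) => Bool))]
  rw [Fintype.sum_prod_type]
  rw [Fintype.sum_bool]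
  rw [add_comm]
  congr 1 <;>
  · rw [Finset.mul_sum]
    refine Finset.sum_congr rfl fun g _ => ?_
    rw [← mul_assoc]
    congr 1
    rw [Fin.prod_univ_succ]
    simp [Fin.consEquiv]

lemma cons_mono {n : ℕ} {b b' : Bool} {g g' : Fin n → Bool} (hb : b ≤ b') (hg : g ≤ g') :
    (Fin.cons b g : Fin (n+1) → Bool) ≤ Fin.cons b' g' := by
  intro k
  refine Fin.cases ?_ ?_ k
  · simpa using hb
  · intro k'; simpa using hg k'

lemma SS_le_SS {α : Type} [Fintype α] [DecidableEq α] (hp0 : 0 ≤ p) (hp1 : p ≤ 1)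
    {F G : (α → Bool) → ℝ} (h : ∀ f, F f ≤ G f) : SS α p F ≤ SS α p G :=
  Finset.sum_le_sum fun f _ =>
    mul_le_mul_of_nonneg_left (h f) (wprod_nonneg hp0 hp1 f)

lemma SS_nonneg {α : Type} [Fintype α] [DecidableEq α] (hp0 : 0 ≤ p) (hp1 : p ≤ 1)
    {F : (α → Bool) → ℝ} (h : ∀ f, 0 ≤ F f) : 0 ≤ SS α p F :=
  Finset.sum_nonneg fun f _ => mul_nonneg (wprod_nonneg hp0 hp1 f) (h f)

lemma harris_fin (hp0 : 0 ≤ p) (hp1 : p ≤ 1) :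
    ∀ (n : ℕ) (F G : (Fin n → Bool) → ℝ), Monotone F → Antitone G →
      SS (Fin n) p (fun f => F f * G f) ≤ SS (Fin n) p F * SS (Fin n) p G := by
  intro n
  induction n with
  | zero =>
    intro F G _ _
    simp [SS]
  | succ n ih =>
    intro F G hF hG
    rw [SS_succ, SS_succ F, SS_succ G]
    have hmonoF : ∀ b : Bool, Monotone (fun g => F (Fin.cons b g)) :=
      fun b _ _ hg => hF (cons_mono le_rfl hg)
    have hantiG : ∀ b : Bool, Antitone (fun g => G (Fin.cons b g)) :=
      fun b _ _ hg => hG (cons_mono le_rfl hg)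
    have h0 := ih _ _ (hmonoF false) (hantiG false)
    have h1 := ih _ _ (hmonoF true) (hantiG true)
    have hA : SS (Fin n) p (fun g => F (Fin.cons false g)) ≤
        SS (Fin n) p (fun g => F (Fin.cons true g)) :=
      SS_le_SS hp0 hp1 fun g => hF (cons_mono (by simp) le_rfl)
    have hB : SS (Fin n) p (fun g => G (Fin.cons true g)) ≤
        SS (Fin n) p (fun g => G (Fin.cons false g)) :=
      SS_le_SS hp0 hp1 fun g => hG (cons_mono (by simp) le_rfl)
    have hc : wB p true = p := rfl
    have hd : wB p false = 1 - p := rfl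
    set A0 := SS (Fin n) p (fun g => F (Fin.cons false g))
    set A1 := SS (Fin n) p (fun g => F (Fin.cons true g))
    set B0 := SS (Fin n) p (fun g => G (Fin.cons false g))
    set B1 := SS (Fin n) p (fun g => G (Fin.cons true g))
    have key : wB p false * (A0 * B0) + wB p true * (A1 * B1) ≤
        (wB p false * A0 + wB p true * A1) * (wB p false * B0 + wB p true * B1) := by
      rw [hc, hd]
      nlinarith [mul_nonneg (mul_nonneg (sub_nonneg.2 hp1) hp0)
        (mul_nonneg (sub_nonneg.2 hA) (sub_nonneg.2 hB))]
    calc wB p false * SS (Fin n) p (fun g => F (Fin.cons false g) * G (Fin.cons false g)) +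
          wB p true * SS (Fin n) p (fun g => F (Fin.cons true g) * G (Fin.cons true g)) ≤
        wB p false * (A0 * B0) + wB p true * (A1 * B1) := by
          have w0 := wB_nonneg hp0 hp1 false
          have w1 := wB_nonneg hp0 hp1 true
          gcongr
      _ ≤ _ := key

lemma harris {α : Type} [Fintype α] [DecidableEq α] (hp0 : 0 ≤ p) (hp1 : p ≤ 1)
    (F G : (α → Bool) → ℝ) (hF : Monotone F) (hG : Antitone G) :
    SS α p (fun f => F f * G f) ≤ SS α p F * SS α p G := by
  obtain ⟨e⟩ : Nonempty (α ≃ Fin (Fintype.card α)) := ⟨Fintype.equivFin α⟩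
  have transfer : ∀ H : (α → Bool) → ℝ,
      SS α p H = SS (Fin (Fintype.card α)) p (fun g => H (g ∘ e)) := by
    intro H
    unfold SS
    rw [← Equiv.sum_comp (Equiv.arrowCongr e (Equiv.refl Bool))]
    refine Finset.sum_congr rfl fun f _ => ?_
    congr 1
    · exact (Equiv.prod_comp e.symm (fun a => wB p (f a))).symm.trans
        (by refine Finset.prod_congr rfl fun k _ => rfl)
    · congr 1; funext a; simp
  rw [transfer, transfer F, transfer G]
  exact harris_fin hp0 hp1 _ _ _
    (fun g g' hg => hF (fun a => hg (e a))) (fun g g' hg => hG (fun a => hg (e a)))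

section helpers
variable {N : ℕ}

lemma adjB_ll {f : Fin N × Fin N → Bool} {i k : Fin N} : adjB f (Sum.inl i) (Sum.inl k) = False := rfl
lemma adjB_lr {f : Fin N × Fin N → Bool} {i j : Fin N} : adjB f (Sum.inl i) (Sum.inr j) = (f (i,j) = true) := rfl
lemma adjB_rl {f : Fin N × Fin N → Bool} {j k : Fin N} : adjB f (Sum.inr j) (Sum.inl k) = (f (k,j) = true) := rfl
lemma adjB_rr {f : Fin N × Fin N → Bool} {i j : Fin N} : adjB f (Sum.inr i) (Sum.inr j) = False := rfl

lemma adjB_symm {f : Fin N × Fin N → Bool} {w u : Fin N ⊕ Fin N} (h : adjB f w u) : adjB f u w := by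
  cases w <;> cases u <;> simpa [adjB_ll, adjB_lr, adjB_rl, adjB_rr] using h

lemma adjB_mono {f f' : Fin N × Fin N → Bool} (hle : f ≤ f') {w u : Fin N ⊕ Fin N}
    (h : adjB f w u) : adjB f' w u := by
  cases w <;> cases u <;>
    simp only [adjB_ll, adjB_lr, adjB_rl, adjB_rr] at h ⊢ <;>
    first
      | exact h
      | exact le_antisymm (by simp) (h ▸ hle _)

lemma isoIndAway_nonneg {v w : Fin N ⊕ Fin N} {f : Fin N × Fin N → Bool} :
    0 ≤ isoIndAway v w f := by
  unfold isoIndAway; split <;> norm_num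

lemma isoIndAway_le_one {v w : Fin N ⊕ Fin N} {f : Fin N × Fin N → Bool} :
    isoIndAway v w f ≤ 1 := by
  unfold isoIndAway; split <;> norm_num

lemma isoIndAway_antitone (v w : Fin N ⊕ Fin N) : Antitone (isoIndAway v w (N := N)) := by
  intro f f' hle
  unfold isoIndAway
  by_cases h : ∀ u, u ≠ v → ¬ adjB f' w u
  · rw [if_pos h, if_pos (fun u hu ha => h u hu (adjB_mono hle ha))]
  · rw [if_neg h]; split <;> norm_num

lemma Xv_antitone (v : Fin N ⊕ Fin N) : Antitone (Xv v (N := N)) := by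
  intro f f' hle
  refine Finset.sum_le_sum fun w _ => ?_
  split
  · exact isoIndAway_antitone v w hle
  · exact le_refl 0

/-- pointwise bound `X_v - Y_v ≤ X`. -/
lemma Xv_sub_Yv_le (i : Fin N) (f : Fin N × Fin N → Bool) :
    Xv (Sum.inl i) f - Yv (Sum.inl i) f ≤ isoCount f := by
  set v := Sum.inl i with hv
  rw [Xv, Yv, isoCount, ← Finset.sum_sub_distrib]
  refine Finset.sum_le_sum fun w _ => ?_
  by_cases ha : adjB f v w
  · have hw : w ≠ v := by
      cases w
      · exact absurd ha (by rw [hv]; exact id)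
      · simp [hv]
    rw [if_pos ha, if_pos hw, sub_self]
    split <;> norm_num
  · rw [if_neg ha, sub_zero]
    by_cases hw : w ≠ v
    · rw [if_pos hw]
      unfold isoIndAway
      by_cases hiso : ∀ u, u ≠ v → ¬ adjB f w u
      · rw [if_pos hiso, if_pos ?_]
        intro u
        by_cases hu : u = v
        · subst hu; exact fun hadj => ha (adjB_symm hadj)
        · exact hiso u hu
      · rw [if_neg hiso]; split <;> norm_num
    · rw [if_neg hw]; split <;> norm_num

/-- `Y_v` as a sum over the right part. -/
lemma Yv_inl (i : Fin N) (f : Fin N × Fin N → Bool) :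
    Yv (Sum.inl i) f =
      ∑ j : Fin N, if f (i,j) = true then isoIndAway (Sum.inl i) (Sum.inr j) f else 0 := by
  rw [Yv, Fintype.sum_sum_type]
  have h0 : (∑ k : Fin N, if adjB f (Sum.inl i) (Sum.inl k)
      then isoIndAway (Sum.inl i) (Sum.inl k) f else 0) = 0 :=
    Finset.sum_eq_zero fun k _ => if_neg (fun h => h)
  rw [h0, zero_add]
  refine Finset.sum_congr rfl fun j _ => ?_
  congr 1

lemma exp_sYv (i : Fin N) (s : ℝ) (f : Fin N × Fin N → Bool) :
    Real.exp (s * Yv (Sum.inl i) f) =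
      ∏ j : Fin N, (1 + (Real.exp s - 1) * (if f (i,j) = true then (1:ℝ) else 0) *
        isoIndAway (Sum.inl i) (Sum.inr j) f) := by
  rw [Yv_inl, Finset.mul_sum, Real.exp_sum]
  refine Finset.prod_congr rfl fun j _ => ?_
  by_cases hb : f (i,j) = true
  · rw [if_pos hb, if_pos hb]
    unfold isoIndAway
    split
    · rw [mul_one, mul_one, mul_one]; ring_nf
    · rw [mul_zero, mul_zero, add_zero, Real.exp_zero]
  · rw [if_neg hb, if_neg hb, mul_zero, Real.exp_zero, mul_zero, zero_mul, add_zero]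

/-- row-`i` independence of `I^v_w` for `v = inl i`, `w ≠ v`. -/
lemma isoIndAway_row_indep (i : Fin N) {w : Fin N ⊕ Fin N} (hw : w ≠ Sum.inl i)
    {f f' : Fin N × Fin N → Bool} (h : ∀ k j, k ≠ i → f (k,j) = f' (k,j)) :
    isoIndAway (Sum.inl i) w f = isoIndAway (Sum.inl i) w f' := by
  unfold isoIndAway
  have key : ∀ u, u ≠ Sum.inl i → (adjB f w u ↔ adjB f' w u) := by
    intro u hu
    cases w with
    | inl k =>
      have hk : k ≠ i := fun hk => hw (by rw [hk])
      cases u with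
      | inl _ => rfl
      | inr j => rw [adjB_lr, adjB_lr, h k j hk]
    | inr j =>
      cases u with
      | inl k =>
        have hk : k ≠ i := fun hk2 => hu (by rw [hk2])
        rw [adjB_rl, adjB_rl, h k j hk]
      | inr _ => rfl
  refine if_congr ?_ rfl rfl
  exact forall_congr' fun u => imp_congr_right fun hu => not_congr (key u hu)

lemma Xv_row_indep (i : Fin N) {f f' : Fin N × Fin N → Bool}
    (h : ∀ k j, k ≠ i → f (k,j) = f' (k,j)) :
    Xv (Sum.inl i) f = Xv (Sum.inl i) f' := by
  unfold Xv
  refine Finset.sum_congr rfl fun w _ => ?_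
  by_cases hw : w ≠ Sum.inl i
  · rw [if_pos hw, if_pos hw, isoIndAway_row_indep i hw h]
  · rw [if_neg hw, if_neg hw]

lemma isoIndAway_inr (i j : Fin N) (f : Fin N × Fin N → Bool) :
    isoIndAway (Sum.inl i) (Sum.inr j) f =
      if ∀ k, k ≠ i → f (k,j) = false then 1 else 0 := by
  unfold isoIndAway
  refine if_congr ?_ rfl rfl
  constructor
  · intro h k hk
    have := h (Sum.inl k) (fun hc => hk (Sum.inl.injEq k i ▸ by injection hc))
    rw [adjB_rl] at this
    exact Bool.not_eq_true _ ▸ (by simpa using this)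
  · intro h u hu
    cases u with
    | inl k =>
      have hk : k ≠ i := fun hk2 => hu (by rw [hk2])
      rw [adjB_rl, h k hk]; simp
    | inr _ => rw [adjB_rr]; exact not_false

end helpers


lemma sum_wRow (β : Type) [Fintype β] [DecidableEq β] :
    ∑ r : β → Bool, ∏ k : β, wB p (r k) = 1 := by
  rw [← Fintype.prod_sum (fun (_ : β) (b : Bool) => wB p b)]
  have : ∀ _k : β, ∑ b : Bool, wB p b = 1 := by
    intro k; rw [Fintype.sum_bool]; simp [wB]
  rw [Finset.prod_congr rfl (fun k _ => this k), Finset.prod_const_one]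

lemma SS_rows {N : ℕ} (T : (Fin N × Fin N → Bool) → ℝ) :
    SS (Fin N × Fin N) p T =
      ∑ M : Fin N → Fin N → Bool,
        (∏ k, ∏ j, wB p (M k j)) * T (fun a => M a.1 a.2) := by
  unfold SS
  rw [← Equiv.sum_comp (Equiv.curry (Fin N) (Fin N) Bool).symm]
  refine Finset.sum_congr rfl fun M _ => ?_
  rw [show (Equiv.curry (Fin N) (Fin N) Bool).symm M = fun a => M a.1 a.2 from rfl,
    Fintype.prod_prod_type]

noncomputable def splice {N : ℕ} (i : Fin N) (r : Fin N → Bool)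
    (M' : {k : Fin N // k ≠ i} → (Fin N → Bool)) : Fin N → Fin N → Bool :=
  (Equiv.funSplitAt i (Fin N → Bool)).symm (r, M')

lemma splice_at {N : ℕ} (i : Fin N) (r : Fin N → Bool)
    (M' : {k : Fin N // k ≠ i} → (Fin N → Bool)) : splice i r M' i = r :=
  congrArg Prod.fst ((Equiv.funSplitAt i (Fin N → Bool)).apply_symm_apply (r, M'))

lemma splice_ne {N : ℕ} (i : Fin N) (r : Fin N → Bool)
    (M' : {k : Fin N // k ≠ i} → (Fin N → Bool)) {k : Fin N} (hk : k ≠ i) :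
    splice i r M' k = M' ⟨k, hk⟩ :=
  congrFun (congrArg Prod.snd
    ((Equiv.funSplitAt i (Fin N → Bool)).apply_symm_apply (r, M'))) ⟨k, hk⟩

lemma w2_splice {N : ℕ} (i : Fin N) (r : Fin N → Bool)
    (M' : {k : Fin N // k ≠ i} → (Fin N → Bool)) :
    (∏ k, ∏ j, wB p (splice i r M' k j)) =
      (∏ j, wB p (r j)) * ∏ k' : {k : Fin N // k ≠ i}, ∏ j, wB p (M' k' j) := by
  rw [← Finset.mul_prod_erase Finset.univ _ (Finset.mem_univ i)]
  congr 1
  · rw [splice_at]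
  · rw [Finset.prod_subtype (Finset.univ.erase i)
      (p := fun k => k ≠ i) (by simp) (fun k => ∏ j, wB p (splice i r M' k j))]
    refine Finset.prod_congr rfl fun k' _ => ?_
    rw [splice_ne i r M' k'.2]

lemma row_integrate {N : ℕ} (i : Fin N)
    (F : (Fin N × Fin N → Bool) → ℝ)
    (hF : ∀ f f', (∀ k j, k ≠ i → f (k,j) = f' (k,j)) → F f = F f')
    (I : Fin N → (Fin N × Fin N → Bool) → ℝ)
    (hI : ∀ j₀ f f', (∀ k j, k ≠ i → f (k,j) = f' (k,j)) → I j₀ f = I j₀ f')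
    (g : Fin N → Bool → ℝ → ℝ) :
    SS (Fin N × Fin N) p (fun f => F f * ∏ j, g j (f (i,j)) (I j f)) =
      SS (Fin N × Fin N) p (fun f => F f *
        ∏ j, (p * g j true (I j f) + (1 - p) * g j false (I j f))) := by
  rw [SS_rows, SS_rows]
  rw [← Equiv.sum_comp (Equiv.funSplitAt i (Fin N → Bool)).symm]
  conv_rhs => rw [← Equiv.sum_comp (Equiv.funSplitAt i (Fin N → Bool)).symm]
  rw [Fintype.sum_prod_type]
  conv_rhs => rw [Fintype.sum_prod_type]
  rw [Finset.sum_comm]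
  conv_rhs => rw [Finset.sum_comm]
  refine Finset.sum_congr rfl fun M' _ => ?_
  have spliceq : ∀ (r : Fin N → Bool) (M'' : {k : Fin N // k ≠ i} → (Fin N → Bool)),
      (Equiv.funSplitAt i (Fin N → Bool)).symm (r, M'') = splice i r M'' := fun _ _ => rfl
  simp only [spliceq]
  set R := ∏ k' : {k : Fin N // k ≠ i}, ∏ j, wB p (M' k' j) with hR
  set b0 : Fin N × Fin N → Bool := fun a => splice i (fun _ => false) M' a.1 a.2 with hb0
  have hagree : ∀ (r : Fin N → Bool) (k j : Fin N), k ≠ i →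
      (fun a : Fin N × Fin N => splice i r M' a.1 a.2) (k,j) = b0 (k,j) := by
    intro r k j hk
    simp only [hb0]
    rw [splice_ne i r M' hk, splice_ne i _ M' hk]
  have hFr : ∀ r, F (fun a => splice i r M' a.1 a.2) = F b0 := fun r => hF _ _ (hagree r)
  have hIr : ∀ j₀ r, I j₀ (fun a => splice i r M' a.1 a.2) = I j₀ b0 :=
    fun j₀ r => hI j₀ _ _ (hagree r)
  have hat : ∀ (r : Fin N → Bool) (j : Fin N),
      (fun a : Fin N × Fin N => splice i r M' a.1 a.2) (i,j) = r j := by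
    intro r j
    show splice i r M' i j = r j
    rw [splice_at]
  calc (∑ r : Fin N → Bool, (∏ k, ∏ j, wB p (splice i r M' k j)) *
        ((fun f => F f * ∏ j, g j (f (i,j)) (I j f)) (fun a => splice i r M' a.1 a.2)))
      = ∑ r : Fin N → Bool, ((∏ j, wB p (r j)) * R) *
          (F b0 * ∏ j, g j (r j) (I j b0)) := by
        refine Finset.sum_congr rfl fun r _ => ?_
        rw [w2_splice]
        simp only [hFr, hIr]
        congr 2
        refine Finset.prod_congr rfl fun j _ => ?_
        rw [splice_at]
    _ = ∑ r : Fin N → Bool, (R * F b0) * ∏ j, (wB p (r j) * g j (r j) (I j b0)) := by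
        refine Finset.sum_congr rfl fun r _ => ?_
        rw [Finset.prod_mul_distrib]
        ring
    _ = (R * F b0) * ∑ r : Fin N → Bool, ∏ j, (wB p (r j) * g j (r j) (I j b0)) :=
        (Finset.mul_sum _ _ _).symm
    _ = (R * F b0) * ∏ j, (∑ b : Bool, wB p b * g j b (I j b0)) :=
        congrArg _ ((Fintype.prod_sum (fun j (b : Bool) => wB p b * g j b (I j b0))).symm)
    _ = (R * F b0) * ∏ j, (p * g j true (I j b0) + (1 - p) * g j false (I j b0)) := by
        refine congrArg _ (Finset.prod_congr rfl fun j _ => ?_)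
        rw [Fintype.sum_bool]
        simp [wB]
    _ = ∑ r : Fin N → Bool, (∏ k, ∏ j, wB p (splice i r M' k j)) *
          ((fun f => F f * ∏ j, (p * g j true (I j f) + (1 - p) * g j false (I j f)))
            (fun a => splice i r M' a.1 a.2)) := by
        have : ∀ r : Fin N → Bool,
            (∏ k, ∏ j, wB p (splice i r M' k j)) *
              ((fun f => F f * ∏ j, (p * g j true (I j f) + (1 - p) * g j false (I j f)))
                (fun a => splice i r M' a.1 a.2)) =
            (∏ j, wB p (r j)) * ((R * F b0) *
              ∏ j, (p * g j true (I j b0) + (1 - p) * g j false (I j b0))) := by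
          intro r
          rw [w2_splice]
          simp only [hFr, hIr]
          ring
        rw [Finset.sum_congr rfl fun r _ => this r, ← Finset.sum_mul, sum_wRow, one_mul]

def colEquiv (N : ℕ) : (Fin N → Fin N → Bool) ≃ (Fin N × Fin N → Bool) where
  toFun C := fun a => C a.2 a.1
  invFun f := fun j k => f (k,j)
  left_inv _ := rfl
  right_inv _ := rfl

lemma SS_cols {N : ℕ} (T : (Fin N × Fin N → Bool) → ℝ) :
    SS (Fin N × Fin N) p T =
      ∑ C : Fin N → Fin N → Bool,
        (∏ j, ∏ k, wB p (C j k)) * T (fun a => C a.2 a.1) := by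
  unfold SS
  rw [← Equiv.sum_comp (colEquiv N)]
  refine Finset.sum_congr rfl fun C _ => ?_
  rw [show (colEquiv N) C = fun a => C a.2 a.1 from rfl, Fintype.prod_prod_type,
    Finset.prod_comm]

lemma one_column (i : Fin N) (hp0 : 0 ≤ p) (hp1 : p ≤ 1) (d : ℝ) :
    ∑ c : Fin N → Bool, (∏ k, wB p (c k)) *
      (1 + d * (if ∀ k, k ≠ i → c k = false then (1:ℝ) else 0)) =
      1 + d * (1-p)^(N-1) := by
  have ind_prod : ∀ c : Fin N → Bool,
      (if ∀ k, k ≠ i → c k = false then (1:ℝ) else 0) =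
        ∏ k, (if k = i then (1:ℝ) else (if c k = true then 0 else 1)) := by
    intro c
    by_cases h : ∀ k, k ≠ i → c k = false
    · rw [if_pos h]
      refine (Finset.prod_eq_one fun k _ => ?_).symm
      by_cases hk : k = i
      · rw [if_pos hk]
      · rw [if_neg hk, h k hk]
        norm_num
    · rw [if_neg h]
      push_neg at h
      obtain ⟨k, hk, hck⟩ := h
      refine (Finset.prod_eq_zero (Finset.mem_univ k) ?_).symm
      rw [if_neg hk, if_pos]
      cases hv : c k
      · exact absurd hv hck
      · rfl
  have step1 : ∑ c : Fin N → Bool, (∏ k, wB p (c k)) *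
      (1 + d * (if ∀ k, k ≠ i → c k = false then (1:ℝ) else 0)) =
      (∑ c : Fin N → Bool, ∏ k, wB p (c k)) +
        d * ∑ c : Fin N → Bool, ∏ k, (wB p (c k) *
          (if k = i then (1:ℝ) else (if c k = true then 0 else 1))) := by
    rw [Finset.mul_sum, ← Finset.sum_add_distrib]
    refine Finset.sum_congr rfl fun c _ => ?_
    rw [ind_prod c, Finset.prod_mul_distrib]
    ring
  rw [step1, sum_wRow]
  congr 1
  congr 1
  have step2 : (∑ c : Fin N → Bool, ∏ k, (wB p (c k) *
      (if k = i then (1:ℝ) else (if c k = true then 0 else 1)))) =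
      ∏ k : Fin N, ∑ b : Bool, wB p b * (if k = i then (1:ℝ) else (if b = true then 0 else 1)) :=
    (Fintype.prod_sum (fun (k : Fin N) (b : Bool) =>
      wB p b * (if k = i then (1:ℝ) else (if b = true then 0 else 1)))).symm
  rw [step2]
  have step3 : ∀ k : Fin N,
      (∑ b : Bool, wB p b * (if k = i then (1:ℝ) else (if b = true then 0 else 1))) =
        if k = i then 1 else (1 - p) := by
    intro k
    rw [Fintype.sum_bool]
    by_cases hk : k = i <;> simp [hk, wB] <;> ring
  rw [Finset.prod_congr rfl fun k _ => step3 k,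
    ← Finset.mul_prod_erase Finset.univ _ (Finset.mem_univ i), if_pos rfl, one_mul,
    Finset.prod_congr rfl (fun k hk => if_neg (Finset.mem_erase.mp hk).1),
    Finset.prod_const, Finset.card_erase_of_mem (Finset.mem_univ i), Finset.card_univ,
    Fintype.card_fin]

lemma col_factorize {N : ℕ} (i : Fin N) (hp0 : 0 ≤ p) (hp1 : p ≤ 1) (d : ℝ) :
    SS (Fin N × Fin N) p
      (fun f => ∏ j, (1 + d * (if ∀ k, k ≠ i → f (k,j) = false then (1:ℝ) else 0))) =
      ∏ _j : Fin N, (1 + d * (1-p)^(N-1)) := by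
  rw [SS_cols]
  have : ∀ C : Fin N → Fin N → Bool,
      (∏ j, ∏ k, wB p (C j k)) *
        (∏ j, (1 + d * (if ∀ k, k ≠ i → (fun a : Fin N × Fin N => C a.2 a.1) (k,j) = false
          then (1:ℝ) else 0))) =
      ∏ j, ((∏ k, wB p (C j k)) *
        (1 + d * (if ∀ k, k ≠ i → C j k = false then (1:ℝ) else 0))) := by
    intro C
    rw [← Finset.prod_mul_distrib]
  rw [Finset.sum_congr rfl fun C _ => this C]
  rw [← Fintype.prod_sum (fun (j : Fin N) (c : Fin N → Bool) =>
    (∏ k, wB p (c k)) * (1 + d * (if ∀ k, k ≠ i → c k = false then (1:ℝ) else 0)))]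
  exact Finset.prod_congr rfl fun j _ => one_column i hp0 hp1 d

lemma SS_congr {α : Type} [Fintype α] [DecidableEq α]
    {F G : (α → Bool) → ℝ} (h : ∀ f, F f = G f) : SS α p F = SS α p G := by
  unfold SS
  exact Finset.sum_congr rfl fun f _ => by rw [h f]

theorem denominator_bound (N : ℕ) (p : ℝ) (hp0 : 0 ≤ p) (hp1 : p ≤ 1)
    (i : Fin N) (s : ℝ) (hs : 0 ≤ s) :
    (∫ f, Real.exp (-s * isoCount f) ∂(productBernoulli (Fin N × Fin N) p)) ≤
      (∫ f, Real.exp (-s * Xv (Sum.inl i) f) ∂(productBernoulli (Fin N × Fin N) p)) *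
        ∏ _w : Fin N, (1 + (Real.exp s - 1) * (1 - p)^(N - 1) * p) ∧
    (∫ f, Real.exp (-s * isoCount f) ∂(productBernoulli (Fin N × Fin N) p)) ≤
      (∫ f, Real.exp (-s * Xv (Sum.inl i) f) ∂(productBernoulli (Fin N × Fin N) p)) *
        Real.exp ((Real.exp s - 1) * N * (1 - p)^(N - 1) * p) := by
  have hexp1 : (1:ℝ) ≤ Real.exp s := Real.one_le_exp hs
  have hc : (0:ℝ) ≤ Real.exp s - 1 := sub_nonneg.2 hexp1
  have h1p : (0:ℝ) ≤ 1 - p := sub_nonneg.2 hp1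
  have hx : (0:ℝ) ≤ (Real.exp s - 1) * (1 - p)^(N-1) * p :=
    mul_nonneg (mul_nonneg hc (pow_nonneg h1p _)) hp0
  simp only [integral_productBernoulli hp0 hp1]
  have mono_F : Monotone (fun f => Real.exp (-s * Xv (Sum.inl i) f)) := fun f f' h =>
    Real.exp_le_exp.2 (mul_le_mul_of_nonpos_left (Xv_antitone _ h) (neg_nonpos.2 hs))
  have anti_G : Antitone (fun f => ∏ j : Fin N,
      (1 + (Real.exp s - 1) * p * isoIndAway (Sum.inl i) (Sum.inr j) f)) := by
    intro f f' h
    refine Finset.prod_le_prod (fun j _ => ?_) (fun j _ => ?_)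
    · exact add_nonneg zero_le_one (mul_nonneg (mul_nonneg hc hp0) isoIndAway_nonneg)
    · exact add_le_add_right (mul_le_mul_of_nonneg_left
        (isoIndAway_antitone _ _ h) (mul_nonneg hc hp0)) 1
  have main : SS (Fin N × Fin N) p (fun f => Real.exp (-s * isoCount f)) ≤
      SS (Fin N × Fin N) p (fun f => Real.exp (-s * Xv (Sum.inl i) f)) *
        ∏ _w : Fin N, (1 + (Real.exp s - 1) * (1 - p)^(N - 1) * p) := by
    calc SS (Fin N × Fin N) p (fun f => Real.exp (-s * isoCount f))
        ≤ SS (Fin N × Fin N) p (fun f => Real.exp (-s * Xv (Sum.inl i) f) *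
            Real.exp (s * Yv (Sum.inl i) f)) := by
          refine SS_le_SS hp0 hp1 fun f => ?_
          rw [← Real.exp_add]
          refine Real.exp_le_exp.2 ?_
          have := Xv_sub_Yv_le i f
          nlinarith
      _ = SS (Fin N × Fin N) p (fun f => Real.exp (-s * Xv (Sum.inl i) f) *
            ∏ j : Fin N, (1 + (Real.exp s - 1) * (if f (i,j) = true then (1:ℝ) else 0) *
              isoIndAway (Sum.inl i) (Sum.inr j) f)) :=
          SS_congr fun f => by rw [exp_sYv]
      _ = SS (Fin N × Fin N) p (fun f => Real.exp (-s * Xv (Sum.inl i) f) *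
            ∏ j : Fin N, (p * (1 + (Real.exp s - 1) * (if (true : Bool) = true then (1:ℝ) else 0) *
                isoIndAway (Sum.inl i) (Sum.inr j) f) +
              (1 - p) * (1 + (Real.exp s - 1) * (if (false : Bool) = true then (1:ℝ) else 0) *
                isoIndAway (Sum.inl i) (Sum.inr j) f))) := by
          exact row_integrate i _
            (fun f f' h => by rw [Xv_row_indep i h])
            (fun j f => isoIndAway (Sum.inl i) (Sum.inr j) f)
            (fun j f f' h => isoIndAway_row_indep i (by simp) h)
            (fun j b y => 1 + (Real.exp s - 1) * (if b = true then (1:ℝ) else 0) * y)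
      _ = SS (Fin N × Fin N) p (fun f => Real.exp (-s * Xv (Sum.inl i) f) *
            ∏ j : Fin N, (1 + (Real.exp s - 1) * p * isoIndAway (Sum.inl i) (Sum.inr j) f)) :=
          SS_congr fun f => by
            refine congrArg _ (Finset.prod_congr rfl fun j _ => ?_)
            simp only [if_pos rfl]
            norm_num
            ring
      _ ≤ SS (Fin N × Fin N) p (fun f => Real.exp (-s * Xv (Sum.inl i) f)) *
            SS (Fin N × Fin N) p (fun f =>
              ∏ j : Fin N, (1 + (Real.exp s - 1) * p * isoIndAway (Sum.inl i) (Sum.inr j) f)) :=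
          harris hp0 hp1 _ _ mono_F anti_G
      _ = SS (Fin N × Fin N) p (fun f => Real.exp (-s * Xv (Sum.inl i) f)) *
            ∏ _w : Fin N, (1 + (Real.exp s - 1) * (1 - p)^(N - 1) * p) := by
          congr 1
          calc SS (Fin N × Fin N) p (fun f =>
                ∏ j : Fin N, (1 + (Real.exp s - 1) * p * isoIndAway (Sum.inl i) (Sum.inr j) f))
              = SS (Fin N × Fin N) p (fun f => ∏ j : Fin N,
                  (1 + ((Real.exp s - 1) * p) *
                    (if ∀ k, k ≠ i → f (k,j) = false then (1:ℝ) else 0))) :=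
                SS_congr fun f => Finset.prod_congr rfl fun j _ => by
                  rw [isoIndAway_inr, mul_assoc]
            _ = ∏ _j : Fin N, (1 + ((Real.exp s - 1) * p) * (1-p)^(N-1)) :=
                col_factorize i hp0 hp1 _
            _ = ∏ _w : Fin N, (1 + (Real.exp s - 1) * (1 - p)^(N - 1) * p) := by
                refine Finset.prod_congr rfl fun j _ => ?_
                ring
  refine ⟨main, le_trans main ?_⟩
  have hSF : 0 ≤ SS (Fin N × Fin N) p (fun f => Real.exp (-s * Xv (Sum.inl i) f)) :=
    SS_nonneg hp0 hp1 fun f => (Real.exp_pos _).le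
  refine mul_le_mul_of_nonneg_left ?_ hSF
  calc (∏ _w : Fin N, (1 + (Real.exp s - 1) * (1 - p)^(N - 1) * p))
      = (1 + (Real.exp s - 1) * (1 - p)^(N - 1) * p) ^ N := by
        rw [Finset.prod_const, Finset.card_univ, Fintype.card_fin]
    _ ≤ (Real.exp ((Real.exp s - 1) * (1 - p)^(N - 1) * p)) ^ N := by
        refine pow_le_pow_left₀ (by linarith) ?_ N
        linarith [Real.add_one_le_exp ((Real.exp s - 1) * (1 - p)^(N - 1) * p)]
    _ = Real.exp ((Real.exp s - 1) * N * (1 - p)^(N - 1) * p) := by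
        rw [← Real.exp_nat_mul]
        ring_nf
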